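/- Let s ≥ 0, k_0 ≥ 1 be integers, c > 0, K > 0, and let I_0 ⊆ ℝ be an interval. Let b ≥ 0 be integrable and suppose (g_j)_{j ≥ s+k_0} are nonnegative measurable functions with Σ_j g_j ≤ b pointwise. For each j ≥ s+k_0 let 𝓝(j) be a collection of pairwise disjoint subintervals of I_0, each of length 2^{j+2}, such that ∫_I g_j dx ≥ c 2^{−s} |I| for every I ∈ 𝓝(j). Then for every interval J with ∫_J b dx ≤ K |J|: Σ_{j ≥ s+k_0} Σ_{I ∈ 𝓝(j), I ⊆ J} |I| ≤ (K/c) 2^{s} |J|. (This is the Carleson measure estimate used for the collections of non-standard intervals.) -/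

import Mathlib

open MeasureTheory Set

/-- the abstract Carleson measure estimate.  If the pairwise disjoint
intervals of `𝓝(j)` (each of length `2^{j+2}`) carry mass `∫_I g_j ≥ c 2^{-s} |I|`, and
`Σ_j g_j ≤ b` pointwise, then for every interval `J` with `∫_J b ≤ K |J|` one has
`Σ_j Σ_{I ∈ 𝓝(j), I ⊆ J} |I| ≤ (K/c) 2^s |J|`. -/
theorem stmt13 (s k0 : ℤ) (hs : 0 ≤ s) (hk0 : 1 ≤ k0) (c K : ℝ) (hc : 0 < c)
    (hK : 0 < K) (a0 b0 : ℝ) (b : ℝ → ℝ) (hb : Integrable b) (hbnn : ∀ x, 0 ≤ b x)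
    (g : ℤ → ℝ → ℝ) (hgm : ∀ j, Measurable (g j)) (hgnn : ∀ j x, 0 ≤ g j x)
    (hsum : ∀ x : ℝ, ∀ F : Finset ℤ, (∀ j ∈ F, s + k0 ≤ j) →
      (∑ j ∈ F, g j x) ≤ b x)
    (𝓝 : ℤ → Set (ℝ × ℝ))
    (hsub : ∀ j : ℤ, ∀ p ∈ 𝓝 j, Set.Ioo p.1 p.2 ⊆ Set.Icc a0 b0 ∧
      p.2 - p.1 = (2:ℝ) ^ (j + 2))
    (hdisj : ∀ j : ℤ, (𝓝 j).PairwiseDisjoint (fun p => Set.Ioo p.1 p.2))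
    (hmass : ∀ j : ℤ, s + k0 ≤ j → ∀ p ∈ 𝓝 j,
      c * (2:ℝ) ^ (-s) * (p.2 - p.1) ≤ ∫ x in Set.Ioo p.1 p.2, g j x) :
    ∀ u v : ℝ, u ≤ v → (∫ x in Set.Icc u v, b x) ≤ K * (v - u) →
      (∑' j : {j : ℤ // s + k0 ≤ j},
          ∑' p : {p : ℝ × ℝ // p ∈ 𝓝 (j : ℤ) ∧ Set.Ioo p.1 p.2 ⊆ Set.Icc u v},
            ENNReal.ofReal ((p : ℝ × ℝ).2 - (p : ℝ × ℝ).1)) ≤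
        ENNReal.ofReal (K / c * (2:ℝ) ^ s * (v - u)) := by
  intro u v huv hJ
  classical
  have hint : ∀ j : ℤ, s + k0 ≤ j → Integrable (g j) := by
    intro j hj
    refine hb.mono' (hgm j).aestronglyMeasurable ?_
    filter_upwards with x
    rw [Real.norm_eq_abs, abs_of_nonneg (hgnn j x)]
    simpa using hsum x {j} (by simpa using hj)
  have key : ∀ F : Finset (Σ j : {j : ℤ // s + k0 ≤ j},
      {p : ℝ × ℝ // p ∈ 𝓝 (j : ℤ) ∧ Set.Ioo p.1 p.2 ⊆ Set.Icc u v}),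
      c * (2:ℝ) ^ (-s) * ∑ x ∈ F, (((x.2 : ℝ × ℝ)).2 - ((x.2 : ℝ × ℝ)).1) ≤ K * (v - u) := by
    intro F
    rw [Finset.mul_sum]
    have step1 : ∑ x ∈ F, c * (2:ℝ) ^ (-s) * (((x.2 : ℝ × ℝ)).2 - ((x.2 : ℝ × ℝ)).1)
        ≤ ∑ x ∈ F, ∫ y in Set.Ioo ((x.2 : ℝ × ℝ)).1 ((x.2 : ℝ × ℝ)).2, g (x.1 : ℤ) y := by
      refine Finset.sum_le_sum fun x _ => ?_
      exact hmass (x.1 : ℤ) x.1.2 (x.2 : ℝ × ℝ) x.2.2.1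
    refine step1.trans ?_
    have hfib := Finset.sum_fiberwise_of_maps_to (s := F)
      (t := F.image Sigma.fst) (g := Sigma.fst)
      (fun x hx => Finset.mem_image_of_mem Sigma.fst hx)
      (fun x => ∫ y in Set.Ioo ((x.2 : ℝ × ℝ)).1 ((x.2 : ℝ × ℝ)).2, g (x.1 : ℤ) y)
    rw [← hfib]
    have step2 : ∀ j ∈ F.image Sigma.fst,
        (∑ x ∈ F.filter (fun x => x.1 = j),
          ∫ y in Set.Ioo ((x.2 : ℝ × ℝ)).1 ((x.2 : ℝ × ℝ)).2, g (x.1 : ℤ) y)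
        ≤ ∫ y in Set.Icc u v, g (j : ℤ) y := by
      intro j _
      have hjs : s + k0 ≤ (j : ℤ) := j.2
      have hdis : (↑(F.filter (fun x => x.1 = j)) :
          Set ((j : {j : ℤ // s + k0 ≤ j}) ×
            {p : ℝ × ℝ // p ∈ 𝓝 (j : ℤ) ∧ Set.Ioo p.1 p.2 ⊆ Set.Icc u v})).Pairwise
          (Function.onFun Disjoint fun x => Set.Ioo ((x.2 : ℝ × ℝ)).1 ((x.2 : ℝ × ℝ)).2) := by
        rintro ⟨xj, xp⟩ hx ⟨yj, yp⟩ hy hxy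
        have hx1 : xj = j := by
          simpa using (Finset.mem_filter.mp (Finset.mem_coe.mp hx)).2
        have hy1 : yj = j := by
          simpa using (Finset.mem_filter.mp (Finset.mem_coe.mp hy)).2
        subst hx1
        subst hy1
        have hne : (xp : ℝ × ℝ) ≠ (yp : ℝ × ℝ) := by
          intro hval
          exact hxy (congrArg (Sigma.mk _) (Subtype.ext hval))
        exact hdisj _ xp.2.1 yp.2.1 hne
      have hbi := MeasureTheory.integral_biUnion_finset (μ := volume)
          (f := g (j : ℤ)) (F.filter (fun x => x.1 = j))
          (s := fun x => Set.Ioo ((x.2 : ℝ × ℝ)).1 ((x.2 : ℝ × ℝ)).2)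
          (fun _ _ => measurableSet_Ioo) hdis
          (fun x _ => (hint (j : ℤ) hjs).integrableOn)
      have hcongr : ∀ x ∈ F.filter (fun x => x.1 = j),
          (∫ y in Set.Ioo ((x.2 : ℝ × ℝ)).1 ((x.2 : ℝ × ℝ)).2, g (x.1 : ℤ) y)
          = ∫ y in Set.Ioo ((x.2 : ℝ × ℝ)).1 ((x.2 : ℝ × ℝ)).2, g (j : ℤ) y := by
        rintro ⟨xj, xp⟩ hx
        have h1 : xj = j := by simpa using (Finset.mem_filter.mp hx).2
        subst h1
        rfl
      rw [Finset.sum_congr rfl hcongr, ← hbi]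
      exact setIntegral_mono_set (hint (j : ℤ) hjs).integrableOn
        (Filter.Eventually.of_forall fun y => hgnn _ y)
        (HasSubset.Subset.eventuallyLE (Set.iUnion₂_subset fun x _ => x.2.2.2))
    refine (Finset.sum_le_sum step2).trans ?_
    have heq : ∑ j ∈ F.image Sigma.fst, ∫ y in Set.Icc u v, g (j : ℤ) y
        = ∫ y in Set.Icc u v, ∑ j ∈ F.image Sigma.fst, g (j : ℤ) y :=
      (MeasureTheory.integral_finset_sum _ (fun (j : {j : ℤ // s + k0 ≤ j}) _ => (hint (j : ℤ) j.2).integrableOn)).symm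
    rw [heq]
    refine le_trans (setIntegral_mono_on
      (MeasureTheory.integrable_finset_sum _ (fun (j : {j : ℤ // s + k0 ≤ j}) _ => (hint (j : ℤ) j.2).integrableOn))
      hb.integrableOn measurableSet_Icc ?_) hJ
    intro x _
    have h1 := hsum x ((F.image Sigma.fst).image Subtype.val) (fun j hj => by
      obtain ⟨j', _, rfl⟩ := Finset.mem_image.mp hj; exact j'.2)
    rwa [Finset.sum_image (fun a _ b _ h => Subtype.ext h)] at h1
  rw [← ENNReal.tsum_sigma, ENNReal.tsum_eq_iSup_sum]
  refine iSup_le fun F => ?_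
  have hnn : ∀ x ∈ F, (0:ℝ) ≤ ((x.2 : ℝ × ℝ)).2 - ((x.2 : ℝ × ℝ)).1 := by
    intro x _
    rw [(hsub (x.1 : ℤ) (x.2 : ℝ × ℝ) x.2.2.1).2]
    positivity
  rw [← ENNReal.ofReal_sum_of_nonneg hnn]
  refine ENNReal.ofReal_le_ofReal ?_
  have hk := key F
  have h2s : (0:ℝ) < (2:ℝ) ^ s := by positivity
  have hid : (2:ℝ) ^ (-s) * (2:ℝ) ^ s = 1 := by
    rw [← zpow_add₀ (two_ne_zero)]
    simp
  have hmul := mul_le_mul_of_nonneg_left hk (le_of_lt (mul_pos (inv_pos.mpr hc) h2s))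
  have hL : (c⁻¹ * (2:ℝ) ^ s) * (c * (2:ℝ) ^ (-s) *
      ∑ x ∈ F, (((x.2 : ℝ × ℝ)).2 - ((x.2 : ℝ × ℝ)).1))
      = ∑ x ∈ F, (((x.2 : ℝ × ℝ)).2 - ((x.2 : ℝ × ℝ)).1) := by
    have : (c⁻¹ * (2:ℝ) ^ s) * (c * (2:ℝ) ^ (-s) *
        ∑ x ∈ F, (((x.2 : ℝ × ℝ)).2 - ((x.2 : ℝ × ℝ)).1))
        = (c⁻¹ * c) * ((2:ℝ) ^ (-s) * (2:ℝ) ^ s) *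
          ∑ x ∈ F, (((x.2 : ℝ × ℝ)).2 - ((x.2 : ℝ × ℝ)).1) := by ring
    rw [this, inv_mul_cancel₀ hc.ne', hid, one_mul, one_mul]
  have hR : (c⁻¹ * (2:ℝ) ^ s) * (K * (v - u)) = K / c * (2:ℝ) ^ s * (v - u) := by
    rw [div_eq_mul_inv]; ring
  rw [hL, hR] at hmul
  exact hmul
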